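/- Let f be a packing of a colorful bin packing instance into L bins. Then for all indices 1 ≤ i ≤ j ≤ n and every color c, we have L ≥ 2·C(i,j,c) − (j − i + 1). Consequently OPT ≥ LB_1. -/

import Mathlib

/-- `cnt c i j g` is `C(i,j,g)`: the number of indices `i ≤ l ≤ j` with `c l = g`. -/
def cnt {γ : Type*} [DecidableEq γ] (c : ℕ → γ) (i j : ℕ) (g : γ) : ℕ :=
  ((Finset.Icc i j).filter fun l => c l = g).card

/-- A packing of the instance with `n` items, sizes `s` and colors `c` (items are indexed
`1,…,n`) into bins `1,…,L`: each bin has total size at most `1`, and two items packed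
consecutively into the same bin have different colors. -/
def IsPacking {γ : Type*} (n L : ℕ) (s : ℕ → ℝ) (c : ℕ → γ) (f : ℕ → ℕ) : Prop :=
  (∀ t, 1 ≤ t → t ≤ n → 1 ≤ f t ∧ f t ≤ L) ∧
  (∀ b, (∑ l ∈ (Finset.Icc 1 n).filter fun l => f l = b, s l) ≤ 1) ∧
  (∀ i j, 1 ≤ i → i < j → j ≤ n → f i = f j →
    (∀ l, i < l → l < j → f l ≠ f i) → c i ≠ c j)

/-- `OPTcost n s c` is the minimum number of bins over all packings of the instance. -/
noncomputable def OPTcost {γ : Type*} (n : ℕ) (s : ℕ → ℝ) (c : ℕ → γ) : ℕ :=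
  sInf {L | ∃ f, IsPacking n L s c f}

lemma bin_bound {γ : Type*} [DecidableEq γ] {n L : ℕ} {s : ℕ → ℝ} {c : ℕ → γ}
    {f : ℕ → ℕ} (hf : IsPacking n L s c f)
    {i j : ℕ} (g : γ) (hi : 1 ≤ i) (hj : j ≤ n) (b : ℕ) :
    2 * (((Finset.Icc i j).filter fun l => f l = b).filter fun l => c l = g).card
      ≤ ((Finset.Icc i j).filter fun l => f l = b).card + 1 := by
  set S := (Finset.Icc i j).filter fun l => f l = b with hS
  set G := S.filter fun l => c l = g with hGdef
  have hsplit : G.card + (S.filter fun l => ¬ c l = g).card = S.card :=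
    Finset.card_filter_add_card_filter_not _
  have hmemS : ∀ l ∈ S, i ≤ l ∧ l ≤ j ∧ f l = b := by
    intro l hl
    simp only [hS, Finset.mem_filter, Finset.mem_Icc] at hl
    exact ⟨hl.1.1, hl.1.2, hl.2⟩
  have hmemG : ∀ l ∈ G, i ≤ l ∧ l ≤ j ∧ f l = b ∧ c l = g := by
    intro l hl
    simp only [hGdef, Finset.mem_filter] at hl
    exact ⟨(hmemS l hl.1).1, (hmemS l hl.1).2.1, (hmemS l hl.1).2.2, hl.2⟩
  have key : G.card ≤ (S.filter fun l => ¬ c l = g).card + 1 := by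
    rcases G.eq_empty_or_nonempty with h | h
    · simp [h]
    · set M := G.max' h with hM
      have hMG : M ∈ G := G.max'_mem h
      have hcard : (G.erase M).card = G.card - 1 := Finset.card_erase_of_mem hMG
      have hpos : 1 ≤ G.card := Finset.card_pos.mpr h
      have hinj : (G.erase M).card ≤ (S.filter fun l => ¬ c l = g).card := by
        apply Finset.card_le_card_of_injOn (fun l => sInf {l' | l < l' ∧ l' ≤ j ∧ f l' = b})
        · intro l hl
          have hlG : l ∈ G := Finset.mem_of_mem_erase hl
          have hlne : l ≠ M := Finset.ne_of_mem_erase hl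
          obtain ⟨hil, hlj, hflb, hclg⟩ := hmemG l hlG
          obtain ⟨hiM, hMj, hfMb, hcMg⟩ := hmemG M hMG
          have hlM : l < M := lt_of_le_of_ne (G.le_max' l hlG) hlne
          have hne : {l' | l < l' ∧ l' ≤ j ∧ f l' = b}.Nonempty := ⟨M, hlM, hMj, hfMb⟩
          have hm := Nat.sInf_mem hne
          set m := sInf {l' | l < l' ∧ l' ≤ j ∧ f l' = b} with hmdef
          obtain ⟨hlm, hmj, hfmb⟩ := hm
          have hcm : c m ≠ g := by
            intro hcm
            have := hf.2.2 l m (le_trans hi hil) hlm (le_trans hmj hj)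
              (hflb.trans hfmb.symm)
              (by
                intro l' hll' hl'm hfl'
                have : m ≤ l' := Nat.sInf_le ⟨hll', le_trans (le_of_lt hl'm) hmj,
                  hfl'.trans hflb⟩
                omega)
            exact this (hclg.trans hcm.symm)
          simp only [Finset.mem_coe, Finset.mem_filter, hS, Finset.mem_Icc]
          exact ⟨⟨⟨le_trans hil (le_of_lt hlm), hmj⟩, hfmb⟩, hcm⟩
        · intro l1 h1 l2 h2 heq
          by_contra hne12
          obtain ⟨hil1, hl1j, hfl1, _⟩ := hmemG l1 (Finset.mem_of_mem_erase h1)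
          obtain ⟨hil2, hl2j, hfl2, _⟩ := hmemG l2 (Finset.mem_of_mem_erase h2)
          have step : ∀ a b' : ℕ, a < b' → b' ≤ j → f b' = b →
              sInf {l' | a < l' ∧ l' ≤ j ∧ f l' = b} ≤ b' := fun a b' h1 h2 h3 =>
            Nat.sInf_le ⟨h1, h2, h3⟩
          have gt1 : l1 < sInf {l' | l1 < l' ∧ l' ≤ j ∧ f l' = b} := by
            obtain ⟨hiM, hMj, hfMb, _⟩ := hmemG M hMG
            have hlM : l1 < M := lt_of_le_of_ne (G.le_max' l1 (Finset.mem_of_mem_erase h1))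
              (Finset.ne_of_mem_erase h1)
            exact (Nat.sInf_mem (⟨M, hlM, hMj, hfMb⟩ :
              {l' | l1 < l' ∧ l' ≤ j ∧ f l' = b}.Nonempty)).1
          have gt2 : l2 < sInf {l' | l2 < l' ∧ l' ≤ j ∧ f l' = b} := by
            obtain ⟨hiM, hMj, hfMb, _⟩ := hmemG M hMG
            have hlM : l2 < M := lt_of_le_of_ne (G.le_max' l2 (Finset.mem_of_mem_erase h2))
              (Finset.ne_of_mem_erase h2)
            exact (Nat.sInf_mem (⟨M, hlM, hMj, hfMb⟩ :
              {l' | l2 < l' ∧ l' ≤ j ∧ f l' = b}.Nonempty)).1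
          rcases lt_or_gt_of_ne hne12 with hlt | hgt
          · have := step l1 l2 hlt hl2j hfl2
            simp only at heq
            omega
          · have := step l2 l1 hgt hl1j hfl1
            simp only at heq
            omega
      omega
  omega

lemma packing_bound {γ : Type*} [DecidableEq γ] {n L : ℕ} {s : ℕ → ℝ} {c : ℕ → γ}
    {f : ℕ → ℕ} (hf : IsPacking n L s c f)
    (i j : ℕ) (g : γ) (hi : 1 ≤ i) (hij : i ≤ j) (hj : j ≤ n) :
    2 * (cnt c i j g : ℤ) - ((j : ℤ) - (i : ℤ) + 1) ≤ (L : ℤ) := by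
  have hmem : ∀ l ∈ Finset.Icc i j, f l ∈ Finset.Icc 1 L := by
    intro l hl
    rw [Finset.mem_Icc] at hl ⊢
    exact hf.1 l (le_trans hi hl.1) (le_trans hl.2 hj)
  have hmem2 : ∀ l ∈ (Finset.Icc i j).filter fun l => c l = g, f l ∈ Finset.Icc 1 L :=
    fun l hl => hmem l (Finset.mem_of_mem_filter l hl)
  have hSsum : (Finset.Icc i j).card
      = ∑ b ∈ Finset.Icc 1 L, ((Finset.Icc i j).filter fun l => f l = b).card :=
    Finset.card_eq_sum_card_fiberwise hmem
  have hGsum : cnt c i j g = ∑ b ∈ Finset.Icc 1 L,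
      (((Finset.Icc i j).filter fun l => f l = b).filter fun l => c l = g).card := by
    rw [cnt, Finset.card_eq_sum_card_fiberwise hmem2]
    exact Finset.sum_congr rfl fun b _ => by rw [Finset.filter_comm]
  have hb : ∀ b ∈ Finset.Icc 1 L,
      2 * ((((Finset.Icc i j).filter fun l => f l = b).filter fun l => c l = g).card : ℤ)
        - (((Finset.Icc i j).filter fun l => f l = b).card : ℤ) ≤ 1 := by
    intro b _
    have := bin_bound hf g hi hj b
    omega
  have hsum := Finset.sum_le_sum hb
  rw [Finset.sum_sub_distrib, ← Finset.mul_sum, Finset.sum_const, Nat.card_Icc,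
    nsmul_eq_mul] at hsum
  have hc1 : ((Finset.Icc i j).card : ℤ) = (j : ℤ) - i + 1 := by
    rw [Nat.card_Icc]; omega
  rw [← Nat.cast_sum, ← Nat.cast_sum, ← hSsum, ← hGsum, hc1] at hsum
  simpa using hsum

/-- if `f` is a packing into `L` bins then for all `1 ≤ i ≤ j ≤ n` and every
color `g`, `L ≥ 2·C(i,j,g) − (j − i + 1)`; consequently `OPT ≥ LB(i,j,g)` for all such
`i, j, g`, i.e. `OPT ≥ LB_1`. -/
theorem packing_ge_LB {γ : Type*} [DecidableEq γ] (n L : ℕ) (s : ℕ → ℝ) (c : ℕ → γ)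
    (hs : ∀ t, 1 ≤ t → t ≤ n → s t ∈ Set.Icc (0 : ℝ) 1)
    (f : ℕ → ℕ) (hf : IsPacking n L s c f) :
    (∀ i j : ℕ, ∀ g : γ, 1 ≤ i → i ≤ j → j ≤ n →
      2 * (cnt c i j g : ℤ) - ((j : ℤ) - (i : ℤ) + 1) ≤ (L : ℤ)) ∧
    (∀ i j : ℕ, ∀ g : γ, 1 ≤ i → i ≤ j → j ≤ n →
      2 * (cnt c i j g : ℤ) - ((j : ℤ) - (i : ℤ) + 1) ≤ (OPTcost n s c : ℤ)) := by
  constructor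
  · intro i j g hi hij hj
    exact packing_bound hf i j g hi hij hj
  · intro i j g hi hij hj
    have hne : {L | ∃ f, IsPacking n L s c f}.Nonempty := ⟨L, f, hf⟩
    obtain ⟨f', hf'⟩ := Nat.sInf_mem hne
    exact packing_bound hf' i j g hi hij hj
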